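/- arXiv:1801.00110 — 3 statements merged into one kernel-verified Lean document; each statement's English description precedes it below -/
import Mathlib

section
/- If A and B are trees rooted at s such that both are subtrees of a common shortest-path tree SPT rooted at s, then the grafted graph A ⊕ B is also a subtree of SPT; in particular A ⊕ B is acyclic. -/
lemma subgraph_coe_acyclic {V : Type*} {G : SimpleGraph V} (hG : G.IsAcyclic)
    (H : G.Subgraph) : H.coe.IsAcyclic := by
  intro v c hc
  exact hG (c.map H.hom) (hc.map Subtype.val_injective)

/-- If `A` and `B` are subtrees of a common shortest-path tree `SPT` rooted at `s`,
then the grafted graph `A ⊕ B` is also a subtree of `SPT`; in particular it is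
connected and acyclic. -/
theorem stmt_8 {V : Type*} (SPT : SimpleGraph V) (hSPT : SPT.IsTree) (s : V)
    (A B : SPT.Subgraph) (hA : A.Connected) (hB : B.Connected)
    (hsA : s ∈ A.verts) (hsB : s ∈ B.verts) (DB : Set V) (hDB : DB ⊆ B.verts)
    (u : V → V) (W : (d : V) → SPT.Walk (u d) d)
    (hu : ∀ d ∈ DB, u d ∈ A.verts ∧ u d ∈ B.verts)
    (hWB : ∀ d ∈ DB, (W d).toSubgraph ≤ B)
    (hint : ∀ d ∈ DB, ∀ y ∈ (W d).support, y ≠ u d → y ∉ A.verts) :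
    (A ⊔ ⨆ d ∈ DB, (W d).toSubgraph).Connected ∧
    ((A ⊔ ⨆ d ∈ DB, (W d).toSubgraph).coe).IsAcyclic := by
  set H : SPT.Subgraph := A ⊔ ⨆ d ∈ DB, (W d).toSubgraph with hH
  have hAH : A ≤ H := le_sup_left
  have hWH : ∀ d ∈ DB, (W d).toSubgraph ≤ H := fun d hd =>
    le_trans (le_iSup₂ (f := fun d (_ : d ∈ DB) => (W d).toSubgraph) d hd) le_sup_right
  -- every vertex of H has a walk to s inside H
  have key : ∀ v ∈ H.verts, ∃ p : SPT.Walk v s, p.toSubgraph ≤ H := by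
    intro v hv
    have hAw : ∀ w ∈ A.verts, ∃ p : SPT.Walk w s, p.toSubgraph ≤ A := by
      intro w hw
      exact (SimpleGraph.Subgraph.preconnected_iff_forall_exists_walk_subgraph A).mp
        hA.preconnected hw hsA
    rcases hv with hv | hv
    · obtain ⟨p, hp⟩ := hAw v hv
      exact ⟨p, hp.trans hAH⟩
    · simp only [SimpleGraph.Subgraph.verts_iSup, Set.mem_iUnion] at hv
      obtain ⟨d, hd, hvd⟩ := hv
      have h1 : (W d).toSubgraph.Connected := (W d).toSubgraph_connected
      obtain ⟨p, hp⟩ :=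
        (SimpleGraph.Subgraph.preconnected_iff_forall_exists_walk_subgraph _).mp
          h1.preconnected hvd (W d).start_mem_verts_toSubgraph
      obtain ⟨q, hq⟩ := hAw (u d) (hu d hd).1
      refine ⟨p.append q, ?_⟩
      rw [SimpleGraph.Walk.toSubgraph_append]
      exact sup_le (hp.trans (hWH d hd)) (hq.trans hAH)
  constructor
  · rw [SimpleGraph.Subgraph.connected_iff_forall_exists_walk_subgraph]
    refine ⟨⟨s, Or.inl hsA⟩, ?_⟩
    intro a b ha hb
    obtain ⟨p, hp⟩ := key a ha
    obtain ⟨q, hq⟩ := key b hb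
    refine ⟨p.append q.reverse, ?_⟩
    rw [SimpleGraph.Walk.toSubgraph_append, SimpleGraph.Walk.toSubgraph_reverse]
    exact sup_le hp hq
  · exact subgraph_coe_acyclic hSPT.IsAcyclic _
end

section
/- Let m ≥ 2 be an integer, α > 0 a real, and p ≥ 1 an integer. Then 2·Σ_{i=1}^{m^{p+1}} (i + (⌊i/m⌋ + 1)·α) ≥ 2m^p·(m(m+1)/2 + αm) + m^{p+1}(m^p − 1)(m + α). -/
lemma sum_div_range (m : ℕ) (hm : 0 < m) (K : ℕ) :
    2 * (∑ i ∈ Finset.range (m * K), i / m) + m * K = m * K * K := by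
  induction K with
  | zero => simp
  | succ K ih =>
      have hmul : m * (K + 1) = m * K + m := by ring
      rw [hmul, Finset.sum_range_add]
      have h2 : ∑ j ∈ Finset.range m, (m * K + j) / m = m * K := by
        have : ∀ j ∈ Finset.range m, (m * K + j) / m = K := by
          intro j hj
          rw [Nat.mul_add_div hm, Nat.div_eq_of_lt (Finset.mem_range.mp hj)]; omega
        rw [Finset.sum_congr rfl this, Finset.sum_const, Finset.card_range, smul_eq_mul,
          Nat.mul_comm]
      rw [h2]
      nlinarith [ih]

lemma sum_div_Icc (m : ℕ) (hm : 0 < m) (K : ℕ) :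
    2 * (∑ i ∈ Finset.Icc 1 (m * K), i / m) + m * K = m * K * K + 2 * K := by
  have e1 : Finset.range (m * K + 1) = insert 0 (Finset.Icc 1 (m * K)) := by
    ext x; simp; omega
  have e2 : ∑ i ∈ Finset.range (m * K + 1), i / m
      = ∑ i ∈ Finset.Icc 1 (m * K), i / m := by
    rw [e1, Finset.sum_insert (by simp)]
    simp
  have e3 : ∑ i ∈ Finset.range (m * K + 1), i / m
      = ∑ i ∈ Finset.range (m * K), i / m + K := by
    rw [Finset.sum_range_succ, Nat.mul_div_cancel_left _ hm]
  have h := sum_div_range m hm K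
  rw [← e2, e3, Nat.mul_add, Nat.add_right_comm, h]

theorem gauss_Icc (n : ℕ) : 2 * ∑ i ∈ Finset.Icc 1 n, i = n * (n + 1) := by
  induction n with
  | zero => simp
  | succ n ih =>
      rw [Finset.sum_Icc_succ_top (by omega), Nat.mul_add, ih]
      ring

/-- Summation lower bound in the necessary direction of the hardness reduction:
`2 Σ_{i=1}^{m^{p+1}} (i + (⌊i/m⌋+1) α) ≥ 2 m^p (m(m+1)/2 + α m) + m^{p+1}(m^p−1)(m+α)`. -/
theorem stmt_15 (m p : ℕ) (hm : 2 ≤ m) (hp : 1 ≤ p) (α : ℝ) (hα : 0 < α) :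
    2 * (m : ℝ) ^ p * (((m : ℝ) * ((m : ℝ) + 1)) / 2 + α * (m : ℝ)) +
      (m : ℝ) ^ (p + 1) * ((m : ℝ) ^ p - 1) * ((m : ℝ) + α) ≤
    2 * ∑ i ∈ Finset.Icc 1 (m ^ (p + 1)), ((i : ℝ) + (((i / m : ℕ) : ℝ) + 1) * α) := by
  have hmpos : 0 < m := by omega
  have hN : m ^ (p + 1) = m * m ^ p := by ring
  have hdiv := sum_div_Icc m hmpos (m ^ p)
  have hgauss := gauss_Icc (m ^ (p + 1))
  set N := m ^ (p + 1) with hNdef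
  have hsum : ∑ i ∈ Finset.Icc 1 N, ((i : ℝ) + (((i / m : ℕ) : ℝ) + 1) * α)
      = ((∑ i ∈ Finset.Icc 1 N, i : ℕ) : ℝ)
        + ((∑ i ∈ Finset.Icc 1 N, i / m : ℕ) : ℝ) * α + (N : ℝ) * α := by
    push_cast
    simp only [add_mul, one_mul]
    rw [Finset.sum_add_distrib, Finset.sum_add_distrib, ← Finset.sum_mul,
      Finset.sum_const, Nat.card_Icc]
    simp [add_assoc]
  rw [hsum]
  have h1 : 2 * ((∑ i ∈ Finset.Icc 1 N, i : ℕ) : ℝ) = (N : ℝ) * ((N : ℝ) + 1) := by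
    exact_mod_cast congrArg (Nat.cast : ℕ → ℝ) hgauss
  have h2 : 2 * ((∑ i ∈ Finset.Icc 1 N, i / m : ℕ) : ℝ) + (m : ℝ) * (m : ℝ) ^ p
      = (m : ℝ) * (m : ℝ) ^ p * (m : ℝ) ^ p + 2 * (m : ℝ) ^ p := by
    have hE : Finset.Icc 1 N = Finset.Icc 1 (m * m ^ p) := by rw [hN]
    rw [hE]
    exact_mod_cast congrArg (Nat.cast : ℕ → ℝ) hdiv
  have hNr : (N : ℝ) = (m : ℝ) * (m : ℝ) ^ p := by
    rw [hN]; push_cast; ring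
  have hKpos : (0 : ℝ) < (m : ℝ) ^ p := by positivity
  have hrw : (m : ℝ) ^ (p + 1) = (m : ℝ) * (m : ℝ) ^ p := by ring
  have h2α : (2 * ((∑ i ∈ Finset.Icc 1 N, i / m : ℕ) : ℝ) + (m : ℝ) * (m : ℝ) ^ p) * α
      = ((m : ℝ) * (m : ℝ) ^ p * (m : ℝ) ^ p + 2 * (m : ℝ) ^ p) * α := by rw [h2]
  rw [hNr] at h1 ⊢
  rw [hrw]
  nlinarith [h1, h2α, mul_pos hα hKpos]
end

section
/- Let G be a graph with nonnegative edge weights and let A = {V_A, E_A} contain a connected subgraph B. In the contraction A·B, where all vertices of B are merged into a single vertex u and, for each neighbor v of u, only a minimum-weight edge among the edges between B and v is kept, the distance from u to any vertex v ∉ V_B in A·B equals min_{b ∈ V_B} of the minimum over paths in A from b to v that use no internal vertex of B. -/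
section Aux

set_option linter.unusedSectionVars false

variable {V : Type*} (A : SimpleGraph V) (w : Sym2 V → ℝ) (hw : ∀ e, 0 ≤ w e)
    (VB : Set V)
    (C : SimpleGraph ({v : V // v ∉ VB} ⊕ PUnit))
    (hC1 : ∀ a b : {v : V // v ∉ VB}, C.Adj (.inl a) (.inl b) ↔ A.Adj a.1 b.1)
    (hC2 : ∀ a : {v : V // v ∉ VB},
      C.Adj (.inl a) (.inr PUnit.unit) ↔ ∃ c ∈ VB, A.Adj c a.1)
    (hC3 : ¬ C.Adj (.inr PUnit.unit) (.inr PUnit.unit))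
    (f : ({v : V // v ∉ VB} ⊕ PUnit) → ({v : V // v ∉ VB} ⊕ PUnit) → ℝ)
    (hf1 : ∀ a b : {v : V // v ∉ VB}, f (.inl a) (.inl b) = w s(a.1, b.1))
    (hf2 : ∀ a : {v : V // v ∉ VB}, f (.inl a) (.inr PUnit.unit) =
      sInf {x | ∃ c ∈ VB, A.Adj c a.1 ∧ x = w s(c, a.1)})
    (hf3 : ∀ x y, f x y = f y x)

include hw hC2 hC3 hf1 hf2 hf3 in
lemma aux_f_nonneg : ∀ x y, C.Adj x y → 0 ≤ f x y := by
  have base : ∀ (a : {v : V // v ∉ VB}), 0 ≤ f (.inl a) (.inr PUnit.unit) := by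
    intro a
    rw [hf2]
    apply Real.sInf_nonneg
    rintro x ⟨c, hc, hadj, rfl⟩
    exact hw _
  rintro (a | u) (b | u') h
  · rw [hf1]; exact hw _
  · cases u'; exact base a
  · cases u; rw [hf3]; exact base b
  · cases u; cases u'; exact absurd h hC3

include hw hC2 hC3 hf1 hf2 hf3 in
lemma aux_wtC_nonneg : ∀ {x y : _} (p : C.Walk x y),
    0 ≤ (p.darts.map (fun d => f d.toProd.1 d.toProd.2)).sum := by
  intro x y p
  induction p with
  | nil => simp
  | cons h p ih =>
    simp only [SimpleGraph.Walk.darts_cons, List.map_cons, List.sum_cons]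
    have := aux_f_nonneg A w hw VB C hC2 hC3 f hf1 hf2 hf3 _ _ h
    linarith

include hw hC1 hC2 hf1 hf2 hf3 in
lemma aux_toC (b : V) (hb : b ∈ VB) :
    ∀ (x z : V) (q : A.Walk x z) (hz : z ∉ VB), (∀ y ∈ q.support, y ≠ b → y ∉ VB) →
      ((x = b → ∃ p : C.Walk (.inr PUnit.unit) (.inl ⟨z, hz⟩),
        (p.darts.map (fun d => f d.toProd.1 d.toProd.2)).sum ≤ (q.edges.map w).sum) ∧
       (∀ h : x ∉ VB, ∃ p : C.Walk (.inl ⟨x, h⟩) (.inl ⟨z, hz⟩),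
        (p.darts.map (fun d => f d.toProd.1 d.toProd.2)).sum ≤ (q.edges.map w).sum)) := by
  intro x z q
  induction q with
  | nil =>
    intro hz _
    constructor
    · rintro rfl; exact absurd hb hz
    · intro h
      exact ⟨SimpleGraph.Walk.nil, by simp⟩
  | @cons x y _ hadj q ih =>
    intro hz hsupp
    have hsupp' : ∀ u ∈ q.support, u ≠ b → u ∉ VB := by
      intro u hu; exact hsupp u (by simp [hu])
    obtain ⟨ih1, ih2⟩ := ih hz hsupp'
    constructor
    · rintro rfl
      have hy : y ∉ VB := hsupp' y q.start_mem_support (fun hyb => hadj.ne (hyb.symm))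
      obtain ⟨p', hp'⟩ := ih2 hy
      have hadjC : C.Adj (.inr PUnit.unit) (.inl ⟨y, hy⟩) :=
        C.adj_symm ((hC2 ⟨y, hy⟩).mpr ⟨x, hb, hadj⟩)
      refine ⟨SimpleGraph.Walk.cons hadjC p', ?_⟩
      simp only [SimpleGraph.Walk.darts_cons, List.map_cons, List.sum_cons,
        SimpleGraph.Walk.edges_cons]
      have hfle : f (Sum.inr PUnit.unit) (Sum.inl ⟨y, hy⟩) ≤ w s(x, y) := by
        rw [hf3, hf2]
        exact csInf_le ⟨0, by rintro u ⟨c, _, _, rfl⟩; exact hw _⟩ ⟨x, hb, hadj, rfl⟩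
      exact add_le_add hfle hp'
    · intro hx
      by_cases hy : y ∉ VB
      · obtain ⟨p', hp'⟩ := ih2 hy
        have hadjC : C.Adj (.inl ⟨x, hx⟩) (.inl ⟨y, hy⟩) := (hC1 _ _).mpr hadj
        refine ⟨SimpleGraph.Walk.cons hadjC p', ?_⟩
        simp only [SimpleGraph.Walk.darts_cons, List.map_cons, List.sum_cons,
          SimpleGraph.Walk.edges_cons]
        rw [hf1]
        exact add_le_add le_rfl hp'
      · push_neg at hy
        have hyb : y = b := by
          by_contra hne
          exact (hsupp' y q.start_mem_support hne) hy
        obtain ⟨p', hp'⟩ := ih1 hyb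
        have hadjC : C.Adj (.inl ⟨x, hx⟩) (.inr PUnit.unit) :=
          (hC2 ⟨x, hx⟩).mpr ⟨y, hy, hadj.symm⟩
        refine ⟨SimpleGraph.Walk.cons hadjC p', ?_⟩
        simp only [SimpleGraph.Walk.darts_cons, List.map_cons, List.sum_cons,
          SimpleGraph.Walk.edges_cons]
        have hfle : f (Sum.inl ⟨x, hx⟩) (Sum.inr PUnit.unit) ≤ w s(x, y) := by
          rw [hf2]
          refine csInf_le ⟨0, by rintro u ⟨c, _, _, rfl⟩; exact hw _⟩ ⟨y, hy, hadj.symm, ?_⟩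
          rw [Sym2.eq_swap]
        exact add_le_add hfle hp'

include hw hC1 hC2 hC3 hf1 hf2 hf3 in
lemma aux_fromC (v : {v : V // v ∉ VB}) :
    ∀ (s t : _) (p : C.Walk s t), t = Sum.inl v → ∀ (ε : ℝ), 0 < ε →
      ((s = Sum.inr PUnit.unit →
        ∃ x ∈ {x | ∃ b ∈ VB, ∃ q : A.Walk b v.1,
            (∀ y ∈ q.support, y ≠ b → y ∉ VB) ∧ x = (q.edges.map w).sum},
          x ≤ (p.darts.map (fun d => f d.toProd.1 d.toProd.2)).sum + ε) ∧
       (∀ (a : {v : V // v ∉ VB}), s = Sum.inl a →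
        (∃ q : A.Walk a.1 v.1, (∀ y ∈ q.support, y ∉ VB) ∧
            (q.edges.map w).sum ≤ (p.darts.map (fun d => f d.toProd.1 d.toProd.2)).sum) ∨
        ∃ x ∈ {x | ∃ b ∈ VB, ∃ q : A.Walk b v.1,
            (∀ y ∈ q.support, y ≠ b → y ∉ VB) ∧ x = (q.edges.map w).sum},
          x ≤ (p.darts.map (fun d => f d.toProd.1 d.toProd.2)).sum + ε)) := by
  intro s t p
  induction p with
  | nil =>
    rintro rfl ε hε
    constructor
    · intro h; exact absurd h (by simp)
    · rintro a ha
      left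
      obtain rfl : a = v := by injection ha with h; exact h.symm
      exact ⟨SimpleGraph.Walk.nil, by simpa using a.2, by simp⟩
  | @cons s t _ h p ih =>
    rintro rfl ε hε
    have hf0 : 0 ≤ f s t := aux_f_nonneg A w hw VB C hC2 hC3 f hf1 hf2 hf3 s t h
    have hp0 : 0 ≤ (p.darts.map (fun d => f d.toProd.1 d.toProd.2)).sum :=
      aux_wtC_nonneg A w hw VB C hC2 hC3 f hf1 hf2 hf3 p
    constructor
    · rintro rfl
      cases t with
      | inr u => cases u; exact absurd h hC3
      | inl a1 =>
        obtain ⟨_, ih2⟩ := ih rfl (ε/2) (by linarith)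
        rcases ih2 a1 rfl with ⟨q, hq1, hq2⟩ | ⟨x, hx, hxle⟩
        · have hS : {x | ∃ c ∈ VB, A.Adj c a1.1 ∧ x = w s(c, a1.1)}.Nonempty := by
            obtain ⟨c, hc, hadj⟩ := (hC2 a1).mp h.symm
            exact ⟨w s(c, a1.1), c, hc, hadj, rfl⟩
          obtain ⟨x, ⟨c, hc, hcadj, rfl⟩, hxlt⟩ :=
            Real.lt_sInf_add_pos hS (show (0:ℝ) < ε/2 by linarith)
          refine ⟨w s(c, a1.1) + (q.edges.map w).sum,
            ⟨c, hc, SimpleGraph.Walk.cons hcadj q, ?_, by simp⟩, ?_⟩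
          · intro y hy hyne
            simp only [SimpleGraph.Walk.support_cons, List.mem_cons] at hy
            rcases hy with rfl | hy
            · exact absurd rfl hyne
            · exact hq1 y hy
          · simp only [SimpleGraph.Walk.darts_cons, List.map_cons, List.sum_cons]
            have heq : f (Sum.inr PUnit.unit) (Sum.inl a1) =
                sInf {x | ∃ c ∈ VB, A.Adj c a1.1 ∧ x = w s(c, a1.1)} := by
              rw [hf3, hf2]
            rw [heq]
            linarith
        · refine ⟨x, hx, ?_⟩
          simp only [SimpleGraph.Walk.darts_cons, List.map_cons, List.sum_cons]
          linarith
    · rintro a rfl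
      cases t with
      | inl b1 =>
        obtain ⟨_, ih2⟩ := ih rfl ε hε
        rcases ih2 b1 rfl with ⟨q, hq1, hq2⟩ | ⟨x, hx, hxle⟩
        · left
          have hadj : A.Adj a.1 b1.1 := (hC1 a b1).mp h
          refine ⟨SimpleGraph.Walk.cons hadj q, ?_, ?_⟩
          · intro y hy
            simp only [SimpleGraph.Walk.support_cons, List.mem_cons] at hy
            rcases hy with rfl | hy
            · exact a.2
            · exact hq1 y hy
          · simp only [SimpleGraph.Walk.darts_cons, List.map_cons, List.sum_cons,
              SimpleGraph.Walk.edges_cons]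
            rw [hf1] at hf0 ⊢
            linarith
        · right
          refine ⟨x, hx, ?_⟩
          simp only [SimpleGraph.Walk.darts_cons, List.map_cons, List.sum_cons]
          linarith
      | inr u =>
        cases u
        obtain ⟨ih1, _⟩ := ih rfl ε hε
        obtain ⟨x, hx, hxle⟩ := ih1 rfl
        right
        refine ⟨x, hx, ?_⟩
        simp only [SimpleGraph.Walk.darts_cons, List.map_cons, List.sum_cons]
        linarith

end Aux

/-- Contraction of a connected subgraph `B` (vertex set `VB`) of `A` into a single
vertex `u`, keeping for each neighbor only a minimum-weight edge: the distance from
`u` to any vertex `v ∉ VB` in the contracted graph equals the infimum, over `b ∈ VB`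
and paths in `A` from `b` to `v` using no internal vertex of `B`, of the path weight. -/
theorem stmt_17 {V : Type*} (A : SimpleGraph V) (w : Sym2 V → ℝ) (hw : ∀ e, 0 ≤ w e)
    (VB : Set V) (hVB : (A.induce VB).Connected)
    (C : SimpleGraph ({v : V // v ∉ VB} ⊕ PUnit))
    (hC1 : ∀ a b : {v : V // v ∉ VB}, C.Adj (.inl a) (.inl b) ↔ A.Adj a.1 b.1)
    (hC2 : ∀ a : {v : V // v ∉ VB},
      C.Adj (.inl a) (.inr PUnit.unit) ↔ ∃ c ∈ VB, A.Adj c a.1)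
    (hC3 : ¬ C.Adj (.inr PUnit.unit) (.inr PUnit.unit))
    (f : ({v : V // v ∉ VB} ⊕ PUnit) → ({v : V // v ∉ VB} ⊕ PUnit) → ℝ)
    (hf1 : ∀ a b : {v : V // v ∉ VB}, f (.inl a) (.inl b) = w s(a.1, b.1))
    (hf2 : ∀ a : {v : V // v ∉ VB}, f (.inl a) (.inr PUnit.unit) =
      sInf {x | ∃ c ∈ VB, A.Adj c a.1 ∧ x = w s(c, a.1)})
    (hf3 : ∀ x y, f x y = f y x) :
    ∀ v : {v : V // v ∉ VB},
      sInf {x | ∃ p : C.Walk (.inr PUnit.unit) (.inl v),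
          x = (p.darts.map (fun d => f d.toProd.1 d.toProd.2)).sum} =
      sInf {x | ∃ b ∈ VB, ∃ p : A.Walk b v.1,
          (∀ y ∈ p.support, y ≠ b → y ∉ VB) ∧ x = (p.edges.map w).sum} := by
  intro v
  set L := {x | ∃ p : C.Walk (.inr PUnit.unit) (.inl v),
      x = (p.darts.map (fun d => f d.toProd.1 d.toProd.2)).sum} with hLdef
  set R := {x | ∃ b ∈ VB, ∃ p : A.Walk b v.1,
      (∀ y ∈ p.support, y ≠ b → y ∉ VB) ∧ x = (p.edges.map w).sum} with hRdef
  have hL0 : ∀ x ∈ L, (0:ℝ) ≤ x := by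
    rintro x ⟨p, rfl⟩
    exact aux_wtC_nonneg A w hw VB C hC2 hC3 f hf1 hf2 hf3 p
  have hR0 : ∀ x ∈ R, (0:ℝ) ≤ x := by
    rintro x ⟨b, hb, q, hq, rfl⟩
    apply List.sum_nonneg
    intro y hy
    obtain ⟨e, _, rfl⟩ := List.mem_map.mp hy
    exact hw e
  have hLR : ∀ x ∈ L, ∀ ε : ℝ, 0 < ε → ∃ y ∈ R, y ≤ x + ε := by
    rintro x ⟨p, rfl⟩ ε hε
    exact (aux_fromC A w hw VB C hC1 hC2 hC3 f hf1 hf2 hf3 v _ _ p rfl ε hε).1 rfl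
  have hRL : ∀ y ∈ R, ∃ x ∈ L, x ≤ y := by
    rintro y ⟨b, hb, q, hq, rfl⟩
    obtain ⟨p, hp⟩ :=
      (aux_toC A w hw VB C hC1 hC2 f hf1 hf2 hf3 b hb b v.1 q v.2 hq).1 rfl
    exact ⟨_, ⟨p, rfl⟩, hp⟩
  by_cases hLne : L.Nonempty
  · have hRne : R.Nonempty := by
      obtain ⟨x, hx⟩ := hLne
      obtain ⟨y, hy, _⟩ := hLR x hx 1 one_pos
      exact ⟨y, hy⟩
    apply le_antisymm
    · apply le_csInf hRne
      intro y hy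
      obtain ⟨x, hx, hxy⟩ := hRL y hy
      exact (csInf_le ⟨0, hL0⟩ hx).trans hxy
    · apply le_csInf hLne
      intro x hx
      refine le_of_forall_pos_le_add ?_
      intro ε hε
      obtain ⟨y, hy, hyx⟩ := hLR x hx ε hε
      exact (csInf_le ⟨0, hR0⟩ hy).trans hyx
  · have hRe : R = ∅ := by
      rw [Set.eq_empty_iff_forall_notMem]
      intro y hy
      obtain ⟨x, hx, _⟩ := hRL y hy
      exact hLne ⟨x, hx⟩
    rw [Set.not_nonempty_iff_eq_empty.mp hLne, hRe]
end
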